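/- Let t₀ < t₁ be real numbers, let f : ℝ×ℝ×ℝ → ℝ be continuous, let h : ℝ → ℝ be continuous on [t₀,t₁], and let φ : ℝ×ℝ → ℝ be continuously differentiable with φ(t₀,0) = 0 and φ(t₁,0) = 0. Suppose that f(x,y,z) + Dφ(x,y,z) ≥ h(x) for every x ∈ [t₀,t₁] and all y, z ∈ ℝ. Then every continuously differentiable function u : ℝ → ℝ with u(t₀) = u(t₁) = 0 satisfies ∫_{t₀}^{t₁} f(x, u(x), u'(x)) dx ≥ ∫_{t₀}^{t₁} h(x) dx. -/

import Mathlib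

open Real MeasureTheory Set

theorem stmt_0
    (t₀ t₁ : ℝ) (ht : t₀ < t₁)
    (f : ℝ → ℝ → ℝ → ℝ) (hf : Continuous fun p : ℝ × ℝ × ℝ => f p.1 p.2.1 p.2.2)
    (h : ℝ → ℝ) (hh : ContinuousOn h (Icc t₀ t₁))
    (φ : ℝ → ℝ → ℝ) (hφ : ContDiff ℝ 1 fun p : ℝ × ℝ => φ p.1 p.2)
    (hφ0 : φ t₀ 0 = 0) (hφ1 : φ t₁ 0 = 0)
    (hpoint : ∀ x ∈ Icc t₀ t₁, ∀ y z : ℝ,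
      f x y z + deriv (fun s => φ s y) x + deriv (fun t => φ x t) y * z ≥ h x)
    (u : ℝ → ℝ) (hu : ContDiff ℝ 1 u) (hu0 : u t₀ = 0) (hu1 : u t₁ = 0) :
    (∫ x in t₀..t₁, f x (u x) (deriv u x)) ≥ ∫ x in t₀..t₁, h x := by
  set F : ℝ × ℝ → ℝ := fun p => φ p.1 p.2 with hF
  have hFd : Differentiable ℝ F := hφ.differentiable one_ne_zero
  have hucont : Continuous u := hu.continuous
  have hu'cont : Continuous (deriv u) := hu.continuous_deriv le_rfl
  -- derivative function of g x = φ x (u x)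
  set g' : ℝ → ℝ := fun x => fderiv ℝ F (x, u x) (1, deriv u x) with hg'
  have hgd : ∀ x : ℝ, HasDerivAt (fun x => φ x (u x)) (g' x) x := by
    intro x
    have h1 : HasFDerivAt F (fderiv ℝ F (x, u x)) (x, u x) := (hFd (x, u x)).hasFDerivAt
    have h2 : HasDerivAt (fun x => (x, u x)) ((1 : ℝ), deriv u x) x :=
      (hasDerivAt_id x).prodMk (hu.differentiable one_ne_zero x).hasDerivAt
    exact h1.comp_hasDerivAt x h2
  -- rewrite g' as partial derivatives
  have hg'eq : ∀ x : ℝ,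
      g' x = deriv (fun s => φ s (u x)) x + deriv (fun t => φ x t) (u x) * deriv u x := by
    intro x
    have hd1 : HasDerivAt (fun s => φ s (u x)) (fderiv ℝ F (x, u x) (1, 0)) x := by
      have h2 : HasDerivAt (fun s : ℝ => (s, u x)) ((1 : ℝ), (0 : ℝ)) x :=
        (hasDerivAt_id x).prodMk (hasDerivAt_const x (u x))
      exact (hFd (x, u x)).hasFDerivAt.comp_hasDerivAt x h2
    have hd2 : HasDerivAt (fun t => φ x t) (fderiv ℝ F (x, u x) (0, 1)) (u x) := by
      have h2 : HasDerivAt (fun t : ℝ => (x, t)) ((0 : ℝ), (1 : ℝ)) (u x) :=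
        (hasDerivAt_const (u x) x).prodMk (hasDerivAt_id (u x))
      exact (hFd (x, u x)).hasFDerivAt.comp_hasDerivAt (u x) h2
    rw [hd1.deriv, hd2.deriv]
    have : ((1 : ℝ), deriv u x) = ((1 : ℝ), (0 : ℝ)) + (deriv u x) • ((0 : ℝ), (1 : ℝ)) := by
      simp [Prod.ext_iff]
    show (fderiv ℝ F (x, u x)) (1, deriv u x) = _
    rw [this, map_add, ContinuousLinearMap.map_smul]
    simp [mul_comm]
  -- continuity of g'
  have hg'cont : Continuous g' := by
    have h1 : Continuous (fun x : ℝ => fderiv ℝ F (x, u x)) :=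
      (hφ.continuous_fderiv one_ne_zero).comp (continuous_id.prodMk hucont)
    have h2 : Continuous (fun x : ℝ => ((1 : ℝ), deriv u x)) :=
      continuous_const.prodMk hu'cont
    exact h1.clm_apply h2
  -- integral of g' is zero
  have hint0 : (∫ x in t₀..t₁, g' x) = 0 := by
    rw [intervalIntegral.integral_eq_sub_of_hasDerivAt
        (fun x _ => hgd x) (hg'cont.intervalIntegrable t₀ t₁)]
    simp [hu0, hu1, hφ0, hφ1]
  have hfcont : Continuous (fun x => f x (u x) (deriv u x)) :=
    hf.comp (continuous_id.prodMk (hucont.prodMk hu'cont))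
  have hmono : (∫ x in t₀..t₁, h x) ≤ ∫ x in t₀..t₁, f x (u x) (deriv u x) + g' x := by
    apply intervalIntegral.integral_mono_on ht.le
    · exact (hh.mono (by rw [uIcc_of_le ht.le])).intervalIntegrable
    · exact ((hfcont.add hg'cont).intervalIntegrable t₀ t₁)
    · intro x hx
      have := hpoint x hx (u x) (deriv u x)
      rw [hg'eq x]
      linarith
  have hsplit : (∫ x in t₀..t₁, f x (u x) (deriv u x) + g' x)
      = (∫ x in t₀..t₁, f x (u x) (deriv u x)) + ∫ x in t₀..t₁, g' x :=
    intervalIntegral.integral_add (hfcont.intervalIntegrable t₀ t₁)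
      (hg'cont.intervalIntegrable t₀ t₁)
  rw [hsplit, hint0, add_zero] at hmono
  exact hmono
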